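/- Let B(x,y) ∈ ℂ[x,y] be a polynomial satisfying B(x,y) = B(−x,y) = B(x,−y) for all x,y. Suppose B = F·P with F(0,0) = 0 and P(0,0) ≠ 0, where moreover F has no nontrivial polynomial factor with nonzero constant term. Then F(x,y) = F(−x,y) = F(x,−y), i.e., F is even in each variable, and hence F(x,y) = F̃(x²,y²) for some polynomial F̃. -/
import Mathlib


open MvPolynomial

noncomputable def flip2 (j : Fin 2) (p : MvPolynomial (Fin 2) ℂ) : MvPolynomial (Fin 2) ℂ :=
  bind₁ (Function.update X j (-X j)) p

lemma flip2_mul (j : Fin 2) (p q : MvPolynomial (Fin 2) ℂ) :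
    flip2 j (p * q) = flip2 j p * flip2 j q := map_mul _ _ _

lemma flip2_dvd {j : Fin 2} {p q : MvPolynomial (Fin 2) ℂ} (h : p ∣ q) :
    flip2 j p ∣ flip2 j q := map_dvd (bind₁ (Function.update X j (-X j))) h

lemma flip2_C (j : Fin 2) (a : ℂ) : flip2 j (C a) = C a := bind₁_C_right _ a

lemma eqC_of_td {p : MvPolynomial (Fin 2) ℂ} (h : p.totalDegree = 0) :
    p = C (coeff 0 p) := by
  rw [totalDegree_eq_zero_iff] at h
  ext m
  rcases eq_or_ne m 0 with rfl | hm
  · simp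
  · rw [coeff_C, if_neg (Ne.symm hm)]
    by_contra hc
    have hmem : m ∈ p.support := by rwa [mem_support_iff]
    have : m = 0 := by ext x; exact h m hmem x
    exact hm this

lemma flip2_monomial (j : Fin 2) (d : Fin 2 →₀ ℕ) (r : ℂ) :
    flip2 j (monomial d r) = (-1 : MvPolynomial (Fin 2) ℂ) ^ (d j) * monomial d r := by
  rw [flip2, bind₁_monomial]
  have h1 : ∀ i ∈ d.support, Function.update X j (-X j) i ^ d i
      = (-1 : MvPolynomial (Fin 2) ℂ) ^ (if i = j then d i else 0) * X i ^ d i := by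
    intro i _
    by_cases hij : i = j
    · subst hij
      rw [Function.update_self, if_pos rfl, neg_pow]
    · rw [Function.update_of_ne hij, if_neg hij, pow_zero, one_mul]
  rw [Finset.prod_congr rfl h1, Finset.prod_mul_distrib, Finset.prod_pow_eq_pow_sum,
    Finset.sum_ite_eq' d.support j (fun i => d i)]
  have h2 : (if j ∈ d.support then d j else 0) = d j := by
    by_cases hj : j ∈ d.support
    · rw [if_pos hj]
    · rw [if_neg hj]; exact (Finsupp.notMem_support_iff.mp hj).symm
  rw [h2, monomial_eq, Finsupp.prod]
  ring

lemma flip2_coeff (j : Fin 2) (p : MvPolynomial (Fin 2) ℂ) (m : Fin 2 →₀ ℕ) :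
    coeff m (flip2 j p) = (-1 : ℂ) ^ (m j) * coeff m p := by
  have expand : flip2 j p = ∑ d ∈ p.support, flip2 j (monomial d (coeff d p)) := by
    conv_lhs => rw [p.as_sum]
    rw [flip2, map_sum]
    rfl
  rw [expand]
  have h1 : ∀ d ∈ p.support, flip2 j (monomial d (coeff d p))
      = (-1 : MvPolynomial (Fin 2) ℂ) ^ (d j) * monomial d (coeff d p) :=
    fun d _ => flip2_monomial j d _
  rw [Finset.sum_congr rfl h1]
  rw [coeff_sum]
  have h2 : ∀ d ∈ p.support, coeff m ((-1 : MvPolynomial (Fin 2) ℂ) ^ (d j) * monomial d (coeff d p))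
      = if d = m then (-1 : ℂ) ^ (d j) * coeff d p else 0 := by
    intro d _
    have hC : ((-1 : MvPolynomial (Fin 2) ℂ) ^ (d j)) = C ((-1 : ℂ) ^ (d j)) := by
      rw [map_pow, map_neg, map_one]
    rw [hC, coeff_C_mul, coeff_monomial]
    by_cases h : d = m <;> simp [h]
  rw [Finset.sum_congr rfl h2, Finset.sum_ite_eq' p.support m
    (fun d => (-1 : ℂ) ^ (d j) * coeff d p)]
  by_cases hm : m ∈ p.support
  · rw [if_pos hm]
  · rw [if_neg hm, notMem_support_iff.mp hm, mul_zero]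

lemma flip2_even {j : Fin 2} {p : MvPolynomial (Fin 2) ℂ} (h : flip2 j p = p)
    (m : Fin 2 →₀ ℕ) (hm : m ∈ p.support) : Even (m j) := by
  rcases Nat.even_or_odd (m j) with he | ho
  · exact he
  · exfalso
    have h1 : coeff m p = (-1 : ℂ) ^ (m j) * coeff m p := by
      conv_lhs => rw [← h, flip2_coeff]
    rw [ho.neg_one_pow, neg_one_mul] at h1
    have : coeff m p = 0 := by linear_combination h1 / 2
    exact mem_support_iff.mp hm this

lemma flip2_eval (j : Fin 2) (p : MvPolynomial (Fin 2) ℂ) (v : Fin 2 → ℂ) :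
    eval v (flip2 j p) = eval (Function.update v j (-(v j))) p := by
  rw [flip2, eval, eval₂Hom_bind₁]
  have h : (fun i => eval₂Hom (RingHom.id ℂ) v (Function.update X j (-X j) i))
      = Function.update v j (-(v j)) := by
    funext i
    by_cases hij : i = j
    · subst hij; rw [Function.update_self, Function.update_self]; simp
    · rw [Function.update_of_ne hij, Function.update_of_ne hij]; simp
  rw [h]; rfl

lemma flip2_flip2 (j : Fin 2) (p : MvPolynomial (Fin 2) ℂ) : flip2 j (flip2 j p) = p := by
  rw [flip2, flip2, bind₁_bind₁]
  have h : (fun i => bind₁ (Function.update X j (-X j)) (Function.update X j (-X j) i))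
      = (X : Fin 2 → MvPolynomial (Fin 2) ℂ) := by
    funext i
    by_cases hij : i = j
    · subst hij; rw [Function.update_self, map_neg, bind₁_X_right, Function.update_self, neg_neg]
    · rw [Function.update_of_ne hij, bind₁_X_right, Function.update_of_ne hij]
  rw [h, bind₁_X_left, AlgHom.id_apply]

lemma flip2_eval00 (j : Fin 2) (p : MvPolynomial (Fin 2) ℂ) :
    eval ![0, 0] (flip2 j p) = eval ![0, 0] p := by
  have h : Function.update (![0, 0] : Fin 2 → ℂ) j (-(![0, 0] j)) = ![0, 0] := by
    funext i
    by_cases hij : i = j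
    · subst hij
      rw [Function.update_self]
      fin_cases i <;> norm_num
    · rw [Function.update_of_ne hij]
  rw [flip2_eval, h]

/-- If `B` is even in each variable, `B = F·P` with `F(0,0)=0`, `P(0,0)≠0`, and
every nonconstant divisor of `F` vanishes at the origin, then `F` is even in
each variable and is a polynomial in `x², y²`. -/
theorem stmt5 (B F P : MvPolynomial (Fin 2) ℂ)
    (hBev : ∀ x y : ℂ, eval ![x, y] B = eval ![-x, y] B ∧
      eval ![x, y] B = eval ![x, -y] B)
    (hfact : B = F * P)
    (hF0 : eval ![0, 0] F = 0) (hP0 : eval ![0, 0] P ≠ 0)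
    (hFfac : ∀ D : MvPolynomial (Fin 2) ℂ, D ∣ F → 0 < D.totalDegree →
      eval ![0, 0] D = 0) :
    (∀ x y : ℂ, eval ![x, y] F = eval ![-x, y] F ∧
      eval ![x, y] F = eval ![x, -y] F) ∧
    ∃ Ft : MvPolynomial (Fin 2) ℂ, ∀ x y : ℂ,
      eval ![x, y] F = eval ![x ^ 2, y ^ 2] Ft := by
  -- F ≠ 0
  have hFne : F ≠ 0 := by
    rintro rfl
    have hmem : (Finsupp.single (0 : Fin 2) 1) ∈ (X 0 + C 1 : MvPolynomial (Fin 2) ℂ).support := by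
      rw [mem_support_iff]
      have h : ¬((0 : Fin 2 →₀ ℕ) = Finsupp.single (0 : Fin 2) 1) := by
        intro h
        exact one_ne_zero (Finsupp.single_eq_zero.mp h.symm)
      simp [coeff_X', coeff_one, h]
    have htd : 0 < (X 0 + C 1 : MvPolynomial (Fin 2) ℂ).totalDegree := by
      have := le_totalDegree hmem
      simpa using lt_of_lt_of_le (by norm_num) this
    have := hFfac (X 0 + C 1) (dvd_zero _) htd
    simp at this
  have hPne : P ≠ 0 := by
    rintro rfl
    simp at hP0
  -- B is flip-invariant
  have hBflip0 : flip2 0 B = B := by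
    apply MvPolynomial.funext
    intro v
    rw [flip2_eval]
    have hv : v = ![v 0, v 1] := by funext i; fin_cases i <;> simp
    have h1 : Function.update v 0 (-(v 0)) = ![-(v 0), v 1] := by
      funext i; fin_cases i <;> simp
    rw [h1, ← (hBev (v 0) (v 1)).1, ← hv]
  have hBflip1 : flip2 1 B = B := by
    apply MvPolynomial.funext
    intro v
    rw [flip2_eval]
    have hv : v = ![v 0, v 1] := by funext i; fin_cases i <;> simp
    have h1 : Function.update v 1 (-(v 1)) = ![v 0, -(v 1)] := by
      funext i; fin_cases i <;> simp
    rw [h1, ← (hBev (v 0) (v 1)).2, ← hv]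
  -- F is flip-invariant
  have hFflip' : ∀ j : Fin 2, flip2 j B = B → flip2 j F = F := by
    intro j hBj
    -- relatively prime
    have hrel : IsRelPrime (flip2 j F) P := by
      intro c hcF hcP
      have hc0 : eval ![0, 0] c ≠ 0 := by
        obtain ⟨q, hq⟩ := hcP
        intro h0
        apply hP0
        rw [hq, map_mul, h0, zero_mul]
      have hcF' : flip2 j c ∣ F := by
        have := flip2_dvd (j := j) hcF
        rwa [flip2_flip2] at this
      by_cases hd : 0 < (flip2 j c).totalDegree
      · exfalso
        have := hFfac _ hcF' hd
        rw [flip2_eval00] at this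
        exact hc0 this
      · have htd0 : (flip2 j c).totalDegree = 0 := Nat.eq_zero_of_not_pos hd
        have hCc := eqC_of_td htd0
        have hceq : c = C (coeff 0 (flip2 j c)) := by
          have := congrArg (flip2 j) hCc
          rwa [flip2_flip2, flip2_C] at this
        have ha : coeff 0 (flip2 j c) ≠ 0 := by
          intro h0
          apply hc0
          rw [hceq, h0, map_zero, map_zero]
        rw [hceq]
        exact (isUnit_iff_ne_zero.mpr ha).map C
    -- flip2 j F ∣ F
    have hdvdB : flip2 j F ∣ F * P := by
      rw [← hfact, ← hBj, hfact, flip2_mul]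
      exact Dvd.intro _ rfl
    have hGF : flip2 j F ∣ F := hrel.dvd_of_dvd_mul_right hdvdB
    have hFG : F ∣ flip2 j F := by
      have := flip2_dvd (j := j) hGF
      rwa [flip2_flip2] at this
    obtain ⟨u, hu⟩ := hFG
    obtain ⟨w, hw⟩ := hGF
    -- u * w = 1
    have huw : u * w = 1 := by
      have h1 : F * (u * w) = F * 1 := by
        rw [mul_one]
        conv_lhs => rw [← mul_assoc, ← hu, ← hw]
      exact mul_left_cancel₀ hFne h1
    have hu0 : eval ![0, 0] u ≠ 0 := by
      intro h0
      have := congrArg (eval ![0, 0]) huw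
      rw [map_mul, h0, zero_mul, map_one] at this
      exact zero_ne_one this
    -- u is a constant
    have huF : flip2 j u ∣ F := by
      have hudvd : u ∣ flip2 j F := ⟨F, by rw [hu, mul_comm]⟩
      have := flip2_dvd (j := j) hudvd
      rwa [flip2_flip2] at this
    have hutd : (flip2 j u).totalDegree = 0 := by
      by_contra h
      have hd : 0 < (flip2 j u).totalDegree := Nat.pos_of_ne_zero h
      have := hFfac _ huF hd
      rw [flip2_eval00] at this
      exact hu0 this
    have hCu := eqC_of_td hutd
    set a := coeff 0 (flip2 j u) with ha_def
    have hueq : u = C a := by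
      have := congrArg (flip2 j) hCu
      rwa [flip2_flip2, flip2_C] at this
    have ha0 : a ≠ 0 := by
      intro h0
      apply hu0
      rw [hueq, h0, map_zero, map_zero]
    -- a ^ 2 = 1
    have hflipF : flip2 j F = F * C a := by rw [hu, hueq]
    have ha2 : a ^ 2 = 1 := by
      have h1 : F = F * C (a ^ 2) := by
        conv_lhs => rw [← flip2_flip2 j F, hflipF, flip2_mul, hflipF, flip2_C]
        rw [mul_assoc, ← map_mul, ← sq]
      have h2 : F * C (a ^ 2) = F * 1 := by rw [mul_one, ← h1]
      have := mul_left_cancel₀ hFne h2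
      have := congrArg (eval ![0, 1]) this
      simpa using this
    have ha1 : a = 1 ∨ a = -1 := by
      have h12 : (a - 1) * (a + 1) = 0 := by linear_combination ha2
      rcases mul_eq_zero.mp h12 with h | h
      · left; exact sub_eq_zero.mp h
      · right; exact eq_neg_of_add_eq_zero_left h
    rcases ha1 with h | h
    · rw [hflipF, h, map_one, mul_one]
    · exfalso
      have h1 : flip2 j B = B := hBj
      rw [hfact, flip2_mul, hflipF, h, map_neg, map_one] at h1
      -- h1 : F * -1 * flip2 j P = F * P
      have hQ : F * (flip2 j P + P) = 0 := by linear_combination -h1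
      rcases mul_eq_zero.mp hQ with h0 | h0
      · exact hFne h0
      · have hPP : flip2 j P = -P := by linear_combination h0
        have heq := flip2_eval00 j P
        rw [hPP, map_neg] at heq
        apply hP0
        linear_combination (-1 / 2 : ℂ) * heq
  have hFflip : ∀ j : Fin 2, flip2 j F = F := by
    intro j
    fin_cases j
    · exact hFflip' 0 hBflip0
    · exact hFflip' 1 hBflip1
  -- Part 1
  have part1 : ∀ x y : ℂ, eval ![x, y] F = eval ![-x, y] F ∧
      eval ![x, y] F = eval ![x, -y] F := by
    intro x y
    constructor
    · have h := flip2_eval 0 F ![x, y]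
      rw [hFflip 0] at h
      have hup : Function.update ![x, y] 0 (-(![x, y] 0)) = ![-x, y] := by
        funext i; fin_cases i <;> simp
      rw [h, hup]
    · have h := flip2_eval 1 F ![x, y]
      rw [hFflip 1] at h
      have hup : Function.update ![x, y] 1 (-(![x, y] 1)) = ![x, -y] := by
        funext i; fin_cases i <;> simp
      rw [h, hup]
  refine ⟨part1, ?_⟩
  -- Part 2
  classical
  refine ⟨∑ m ∈ F.support, monomial (Finsupp.mapRange (· / 2) (Nat.zero_div 2) m)
    (coeff m F), ?_⟩
  intro x y
  rw [map_sum]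
  conv_lhs => rw [F.as_sum]
  rw [map_sum]
  apply Finset.sum_congr rfl
  intro m hm
  rw [eval_monomial, eval_monomial]
  congr 1
  rw [Finsupp.prod_mapRange_index (fun a => pow_zero _)]
  apply Finsupp.prod_congr
  intro n _
  have hev : Even (m n) := by
    fin_cases n
    · exact flip2_even (hFflip 0) m hm
    · exact flip2_even (hFflip 1) m hm
  have hsq : (![x ^ 2, y ^ 2] : Fin 2 → ℂ) n = (![x, y] n) ^ 2 := by
    fin_cases n <;> simp
  rw [hsq, ← pow_mul]
  congr 1
  rw [mul_comm]
  exact (Nat.div_two_mul_two_of_even hev).symm
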